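/- Let A = [[B, C], [0, D]] be a nonnegative block matrix. Then rank_+(A) \leq rank_+(B|C) + rank_+(D), where (B|C) is the horizontal concatenation of B and C. -/

import Mathlib

noncomputable def nnRank {α β : Type} [Fintype α] [Fintype β] (A : Matrix α β ℝ) : ℕ :=
  sInf {r : ℕ | ∃ u : Fin r → α → ℝ, ∃ v : Fin r → β → ℝ,
    (∀ t i, 0 ≤ u t i) ∧ (∀ t j, 0 ≤ v t j) ∧ ∀ i j, A i j = ∑ t, u t i * v t j}

lemma nnRank_mem {α β : Type} [Fintype α] [Fintype β] [DecidableEq α] [DecidableEq β]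
    (A : Matrix α β ℝ) (hA : ∀ i j, 0 ≤ A i j) :
    nnRank A ∈ {r : ℕ | ∃ u : Fin r → α → ℝ, ∃ v : Fin r → β → ℝ,
      (∀ t i, 0 ≤ u t i) ∧ (∀ t j, 0 ≤ v t j) ∧ ∀ i j, A i j = ∑ t, u t i * v t j} := by
  apply Nat.sInf_mem
  classical
  obtain ⟨e⟩ := Fintype.truncEquivFin (α × β)
  refine ⟨Fintype.card (α × β),
    fun t i => if (e.symm t).1 = i then A (e.symm t).1 (e.symm t).2 else 0,
    fun t j => if (e.symm t).2 = j then 1 else 0, ?_, ?_, ?_⟩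
  · intro t i; dsimp only; split
    · exact hA _ _
    · exact le_rfl
  · intro t j; dsimp only; split <;> norm_num
  · intro i j
    rw [Fintype.sum_equiv e.symm _
      (fun x : α × β => (if x.1 = i then A x.1 x.2 else 0) * (if x.2 = j then 1 else 0))
      (fun t => rfl)]
    rw [show (∑ x : α × β, (if x.1 = i then A x.1 x.2 else 0) * (if x.2 = j then 1 else 0))
        = ∑ x : α × β, if x = (i, j) then A i j else 0 by
      apply Finset.sum_congr rfl
      intro x _
      by_cases h1 : x.1 = i <;> by_cases h2 : x.2 = j <;>
        simp [h1, h2, Prod.ext_iff]]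
    simp

theorem stmt_18 {m1 m2 n1 n2 : ℕ}
    (B : Matrix (Fin m1) (Fin n1) ℝ) (C : Matrix (Fin m1) (Fin n2) ℝ)
    (D : Matrix (Fin m2) (Fin n2) ℝ)
    (hB : ∀ i j, 0 ≤ B i j) (hC : ∀ i j, 0 ≤ C i j) (hD : ∀ i j, 0 ≤ D i j) :
    nnRank (Matrix.fromBlocks B C 0 D) ≤ nnRank (Matrix.fromCols B C) + nnRank D := by
  classical
  obtain ⟨u1, v1, hu1, hv1, h1⟩ := nnRank_mem (Matrix.fromCols B C)
    (by rintro i (j | j) <;> simp [Matrix.fromCols] <;> [exact hB i j; exact hC i j])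
  obtain ⟨u2, v2, hu2, hv2, h2⟩ := nnRank_mem D hD
  apply Nat.sInf_le
  refine ⟨fun t => Sum.elim (fun s => Sum.elim (u1 s) 0) (fun s => Sum.elim 0 (u2 s))
      (finSumFinEquiv.symm t),
    fun t => Sum.elim (fun s => v1 s) (fun s => Sum.elim 0 (v2 s)) (finSumFinEquiv.symm t),
    ?_, ?_, ?_⟩
  · intro t i
    dsimp only
    generalize finSumFinEquiv.symm t = s
    cases' s with s s <;> cases' i with i i <;> simp
    · exact hu1 s i
    · exact hu2 s i
  · intro t j
    dsimp only
    generalize finSumFinEquiv.symm t = s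
    cases' s with s s <;> cases' j with j j <;> simp
    · exact hv1 s (Sum.inl j)
    · exact hv1 s (Sum.inr j)
    · exact hv2 s j
  · intro i j
    rw [Fintype.sum_equiv finSumFinEquiv.symm _
      (fun s => Sum.elim (fun s => Sum.elim (u1 s) 0) (fun s => Sum.elim 0 (u2 s)) s i *
        Sum.elim (fun s => v1 s) (fun s => Sum.elim 0 (v2 s)) s j)
      (fun t => rfl)]
    rw [Fintype.sum_sum_type]
    cases' i with i i <;> cases' j with j j
    · have := h1 i (Sum.inl j)
      simp [Matrix.fromCols_apply_inl] at this
      simpa using this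
    · have := h1 i (Sum.inr j)
      simp [Matrix.fromCols_apply_inr] at this
      simpa using this
    · simp
    · simpa using h2 i j
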